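/- Consider a K-armed bandit on a probability space (Ω, F, P): for each arm i ∈ {1,…,K} and u ≥ 1 let X_{i,u} : Ω → ℝ be the reward of the u-th pull of arm i, where the family (X_{i,u})_{i,u} is mutually independent, for each fixed i the sequence (X_{i,u})_{u≥1} is identically distributed and integrable with mean μ i, and there is a unique arm i* with μ* := μ i* = max_i μ i. Let I : ℕ → Ω → {1,…,K} be a measurable selection process such that for P-almost every ω, the realized selection sequence t ↦ I t (ω) obeys the UCB1 rule with constant C = 2 applied to the realized reward sequences u ↦ X_{i,u}(ω). Then for every suboptimal arm i ≠ i*, the realized pull fraction satisfies T i n / n → 0 almost surely as n → ∞. -/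

import Mathlib

open Finset Filter

/-- Number of pulls of arm `i` among rounds `1, …, t`. -/
noncomputable def pullCount {K : ℕ} (I : ℕ → Fin K) (i : Fin K) (t : ℕ) : ℕ :=
  ((Finset.Icc 1 t).filter (fun s => I s = i)).card

/-- Empirical mean of arm `i` after round `t` (equal to `0` when the arm was never pulled). -/
noncomputable def empMean {K : ℕ} (x : Fin K → ℕ → ℝ) (I : ℕ → Fin K) (i : Fin K) (t : ℕ) : ℝ :=
  if pullCount I i t = 0 then 0
  else (1 / (pullCount I i t : ℝ)) * ∑ u ∈ Finset.Icc 1 (pullCount I i t), x i u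

/-- The selection sequence `I` obeys the UCB1 rule with constant `C`. -/
def UCB1Rule {K : ℕ} (x : Fin K → ℕ → ℝ) (I : ℕ → Fin K) (C : ℝ) : Prop :=
  ∀ t : ℕ, 1 ≤ t →
    if ∃ i : Fin K, pullCount I i (t - 1) = 0 then pullCount I (I t) (t - 1) = 0
    else ∀ j : Fin K,
      empMean x I j (t - 1) + Real.sqrt (C * Real.log t / (pullCount I j (t - 1) : ℝ))
        ≤ empMean x I (I t) (t - 1)
            + Real.sqrt (C * Real.log t / (pullCount I (I t) (t - 1) : ℝ))


open MeasureTheory ProbabilityTheory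

namespace UCBAux
variable {K : ℕ}

lemma pullCount_succ (I : ℕ → Fin K) (i : Fin K) (t : ℕ) :
    pullCount I i (t+1) = pullCount I i t + if I (t+1) = i then 1 else 0 := by
  unfold pullCount
  rw [← Finset.insert_Icc_right_eq_Icc_add_one (by omega : 1 ≤ t + 1), Finset.filter_insert]
  split
  · rw [Finset.card_insert_of_notMem (by simp)]
  · simp

lemma pullCount_mono (I : ℕ → Fin K) (i : Fin K) : Monotone (pullCount I i) := by
  intro a b h
  exact Finset.card_le_card (Finset.filter_subset_filter _ (Finset.Icc_subset_Icc_right h))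

lemma empMean_eq (x : Fin K → ℕ → ℝ) (I : ℕ → Fin K) (i : Fin K) (t : ℕ) :
    empMean x I i t = (1 / (pullCount I i t : ℝ)) * ∑ u ∈ Finset.Icc 1 (pullCount I i t), x i u := by
  unfold empMean
  split
  · next h => simp [h]
  · rfl

/-- After round `t`, at least `min t K` arms have been pulled. -/
lemma card_pulled (x : Fin K → ℕ → ℝ) {C : ℝ} (I : ℕ → Fin K) (hU : UCB1Rule x I C) (t : ℕ) :
    min t K ≤ (Finset.univ.filter (fun i : Fin K => 1 ≤ pullCount I i t)).card := by
  induction t with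
  | zero => simp
  | succ t ih =>
    by_cases h : ∃ i : Fin K, pullCount I i t = 0
    · have hUt := hU (t+1) (by omega)
      rw [if_pos (by simpa using h)] at hUt
      -- I (t+1) has count 0 at time t, 1 at time t+1
      have hsub : insert (I (t+1)) (Finset.univ.filter (fun i : Fin K => 1 ≤ pullCount I i t))
          ⊆ Finset.univ.filter (fun i : Fin K => 1 ≤ pullCount I i (t+1)) := by
        intro j hj
        simp only [Finset.mem_insert, Finset.mem_filter, Finset.mem_univ, true_and] at hj ⊢
        rcases hj with rfl | hj
        · rw [pullCount_succ]; simp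
        · exact le_trans hj (pullCount_mono I j (Nat.le_succ t))
      have hnot : I (t+1) ∉ (Finset.univ.filter (fun i : Fin K => 1 ≤ pullCount I i t)) := by
        simp only [Finset.mem_filter, Finset.mem_univ, true_and]
        simp only [Nat.add_sub_cancel] at hUt
        omega
      calc min (t+1) K ≤ min t K + 1 := by omega
        _ ≤ (Finset.univ.filter (fun i : Fin K => 1 ≤ pullCount I i t)).card + 1 := by omega
        _ = (insert (I (t+1)) (Finset.univ.filter (fun i : Fin K => 1 ≤ pullCount I i t))).card := by
            rw [Finset.card_insert_of_notMem hnot]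
        _ ≤ _ := Finset.card_le_card hsub
    · push_neg at h
      have : ∀ i : Fin K, 1 ≤ pullCount I i (t+1) := fun i =>
        le_trans (by have := h i; omega) (pullCount_mono I i (Nat.le_succ t))
      have : (Finset.univ.filter (fun i : Fin K => 1 ≤ pullCount I i (t+1))) = Finset.univ :=
        Finset.filter_true_of_mem (fun i _ => this i)
      rw [this, Finset.card_univ, Fintype.card_fin]
      omega

lemma pullCount_pos (x : Fin K → ℕ → ℝ) {C : ℝ} (I : ℕ → Fin K) (hU : UCB1Rule x I C)
    {t : ℕ} (ht : K ≤ t) (i : Fin K) : 1 ≤ pullCount I i t := by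
  have h := card_pulled x I hU K
  rw [min_self] at h
  have hle : (Finset.univ.filter (fun i : Fin K => 1 ≤ pullCount I i K)).card ≤ K := by
    simpa using Finset.card_filter_le Finset.univ (fun i : Fin K => 1 ≤ pullCount I i K)
  have huniv := Finset.eq_univ_of_card (Finset.univ.filter (fun i : Fin K => 1 ≤ pullCount I i K))
    (by simp only [Fintype.card_fin]; omega)
  have : i ∈ Finset.univ.filter (fun i : Fin K => 1 ≤ pullCount I i K) := by
    rw [huniv]; exact Finset.mem_univ i
  simp only [Finset.mem_filter] at this
  exact le_trans this.2 (pullCount_mono I i ht)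


lemma pullCount_le (I : ℕ → Fin K) (i : Fin K) (t : ℕ) : pullCount I i t ≤ t := by
  have := Finset.card_filter_le (Finset.Icc 1 t) (fun s => I s = i)
  simpa [Nat.card_Icc, pullCount] using this

lemma sum_pullCount (I : ℕ → Fin K) (t : ℕ) : ∑ i : Fin K, pullCount I i t = t := by
  have := Finset.card_eq_sum_card_fiberwise
    (f := I) (s := Finset.Icc 1 t) (t := Finset.univ) (fun s _ => Finset.mem_univ (I s))
  unfold pullCount
  rw [← this, Nat.card_Icc]
  omega

lemma pullCount_unbounded (x : Fin K → ℕ → ℝ) (I : ℕ → Fin K)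
    (hU : UCB1Rule x I 2) (M : ℝ)
    (hM : ∀ (k : Fin K) (m : ℕ), |(1 / (m:ℝ)) * ∑ u ∈ Finset.Icc 1 m, x k u| ≤ M)
    (j : Fin K) (B : ℕ) : ∃ t, B < pullCount I j t := by
  classical
  by_contra hcon
  push_neg at hcon
  have hEx : ∃ B, ∀ t, pullCount I j t ≤ B := ⟨B, hcon⟩
  set L := Nat.find hEx with hLdef
  have hL : ∀ t, pullCount I j t ≤ L := Nat.find_spec hEx
  have hL1 : 1 ≤ L := le_trans (pullCount_pos x I hU (le_refl K) j) (hL K)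
  have hex0 : ∃ t0, pullCount I j t0 = L := by
    by_contra h0
    push_neg at h0
    have hall : ∀ t, pullCount I j t ≤ L - 1 := fun t => by
      have h1 := hL t; have h2 := h0 t; omega
    exact Nat.find_min hEx (by omega) hall
  obtain ⟨t0, ht0⟩ := hex0
  have hconst : ∀ t, t0 ≤ t → pullCount I j t = L := fun t ht =>
    le_antisymm (hL t) (ht0 ▸ pullCount_mono I j ht)
  set c : ℝ := (1 / (L:ℝ)) * ∑ u ∈ Finset.Icc 1 L, x j u with hc
  set D : ℝ := M - c with hD
  have hcM : |c| ≤ M := hM j L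
  have hD0 : 0 ≤ D := by
    have : c ≤ M := le_trans (le_abs_self c) hcM
    simp only [hD]; linarith
  have hlogtend : Tendsto (fun t : ℕ => Real.log t) atTop atTop :=
    Real.tendsto_log_atTop.comp tendsto_natCast_atTop_atTop
  obtain ⟨t4, ht4⟩ := Filter.eventually_atTop.mp
    (hlogtend.eventually_ge_atTop (max 1 (2 * L * D^2)))
  set t5 := max (max t4 (K+1)) (t0+1) with ht5def
  have h5K : K + 1 ≤ t5 := le_trans (le_max_right t4 (K+1)) (le_max_left _ _)
  have h5t4 : t4 ≤ t5 := le_trans (le_max_left t4 (K+1)) (le_max_left _ _)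
  have h5t0 : t0 + 1 ≤ t5 := le_max_right _ _
  have hLpos : (0:ℝ) < (L:ℝ) := by exact_mod_cast hL1
  have key : ∀ t, t5 ≤ t → pullCount I (I t) (t - 1) ≤ 4 * L := by
    intro t ht
    have ht1 : 1 ≤ t := by omega
    have htK : K ≤ t - 1 := by omega
    have ht0' : t0 ≤ t - 1 := by omega
    have hUt := hU t ht1
    have hne : ¬ ∃ k : Fin K, pullCount I k (t-1) = 0 := by
      rintro ⟨k, hk⟩
      have := pullCount_pos x I hU htK k
      omega
    rw [if_neg hne] at hUt
    have hkey := hUt j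
    have hTj : pullCount I j (t-1) = L := hconst _ ht0'
    have hTI1 : 1 ≤ pullCount I (I t) (t-1) := pullCount_pos x I hU htK _
    set TI := pullCount I (I t) (t-1) with hTIdef
    have hTIpos : (0:ℝ) < (TI:ℝ) := by exact_mod_cast hTI1
    have hEj : empMean x I j (t-1) = c := by rw [empMean_eq, hTj]
    have hEI : empMean x I (I t) (t-1) ≤ M := by
      rw [empMean_eq]
      exact le_trans (le_abs_self _) (hM _ _)
    have hlog := ht4 t (by omega)
    have hlog1 : 1 ≤ Real.log t := le_trans (le_max_left _ _) hlog
    have hlog2 : 2 * (L:ℝ) * D^2 ≤ Real.log t := le_trans (le_max_right _ _) hlog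
    rw [hEj, hTj] at hkey
    -- hkey : c + √(2 log t / L) ≤ empMean (I t) + √(2 log t / TI)
    have ha : (0:ℝ) ≤ 2 * Real.log t / L := div_nonneg (by linarith) hLpos.le
    have hsq1 : 2 * D ≤ Real.sqrt (2 * Real.log t / L) := by
      rw [Real.le_sqrt (by linarith) ha, le_div_iff₀ hLpos]
      nlinarith
    have hsqTI : Real.sqrt (2 * Real.log t / L) - D ≤ Real.sqrt (2 * Real.log t / TI) := by
      linarith
    have hquarter : Real.sqrt (2 * Real.log t / (4 * L)) = Real.sqrt (2 * Real.log t / L) / 2 := by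
      rw [show 2 * Real.log t / (4 * (L:ℝ)) = (2 * Real.log t / L) / 4 by ring,
        Real.sqrt_div ha 4, show Real.sqrt 4 = 2 by
          rw [show (4:ℝ) = 2^2 by norm_num, Real.sqrt_sq two_pos.le]]
    have hfin : Real.sqrt (2 * Real.log t / (4 * L)) ≤ Real.sqrt (2 * Real.log t / TI) := by
      rw [hquarter]; linarith
    have hdiv : 2 * Real.log t / (4 * L) ≤ 2 * Real.log t / TI := by
      have h0 : (0:ℝ) ≤ 2 * Real.log t / TI := div_nonneg (by linarith) (le_of_lt hTIpos)
      exact (Real.sqrt_le_sqrt_iff h0).mp hfin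
    have hTI4L : (TI:ℝ) ≤ 4 * L := by
      have h4L : (0:ℝ) < 4 * L := by linarith
      have := (div_le_div_iff₀ h4L hTIpos).mp hdiv
      nlinarith
    exact_mod_cast hTI4L
  have hbd : ∀ i : Fin K, ∀ t, t5 ≤ t → pullCount I i t ≤ max t5 (4*L+1) := by
    intro i t ht
    induction t, ht using Nat.le_induction with
    | base => exact le_trans (pullCount_le I i t5) (le_max_left _ _)
    | succ n hn ih =>
      rw [pullCount_succ]
      split
      · next h =>
        have hk := key (n+1) (by omega)
        rw [show n+1-1 = n from rfl, h] at hk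
        exact le_trans (by omega) (le_max_right t5 (4*L+1))
      · simpa using ih
  set N := K * (max t5 (4*L+1)) + t5 with hN
  have hsum : ∑ i : Fin K, pullCount I i N ≤ ∑ _i : Fin K, max t5 (4*L+1) :=
    Finset.sum_le_sum (fun i _ => hbd i N (by omega))
  rw [sum_pullCount] at hsum
  simp only [Finset.sum_const, Finset.card_univ, Fintype.card_fin, smul_eq_mul] at hsum
  omega

lemma det_main (x : Fin K → ℕ → ℝ) (I : ℕ → Fin K)
    (hU : UCB1Rule x I 2) (μ : Fin K → ℝ)
    (havg : ∀ k : Fin K, Tendsto (fun m : ℕ => (1 / (m:ℝ)) * ∑ u ∈ Finset.Icc 1 m, x k u)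
      atTop (nhds (μ k)))
    (istar i : Fin K) (hΔ : μ i < μ istar) :
    Tendsto (fun n : ℕ => (pullCount I i n : ℝ) / n) atTop (nhds 0) := by
  classical
  have hbdd : ∀ k : Fin K, ∃ Mk : ℝ,
      ∀ m : ℕ, |(1 / (m:ℝ)) * ∑ u ∈ Finset.Icc 1 m, x k u| ≤ Mk := by
    intro k
    have h1 : Tendsto (fun m : ℕ => |(1 / (m:ℝ)) * ∑ u ∈ Finset.Icc 1 m, x k u|)
        atTop (nhds |μ k|) := (havg k).abs
    obtain ⟨Mk, hMk⟩ := h1.bddAbove_range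
    exact ⟨Mk, fun m => hMk ⟨m, rfl⟩⟩
  choose Mk hMk using hbdd
  set M : ℝ := ∑ k : Fin K, |Mk k| with hMdef
  have hM : ∀ (k : Fin K) (m : ℕ), |(1 / (m:ℝ)) * ∑ u ∈ Finset.Icc 1 m, x k u| ≤ M := by
    intro k m
    calc |(1 / (m:ℝ)) * ∑ u ∈ Finset.Icc 1 m, x k u| ≤ Mk k := hMk k m
      _ ≤ |Mk k| := le_abs_self _
      _ ≤ M := Finset.single_le_sum (fun k _ => abs_nonneg (Mk k)) (Finset.mem_univ k)
  have hT : ∀ k : Fin K, Tendsto (fun t => pullCount I k t) atTop atTop := by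
    intro k
    apply tendsto_atTop_atTop_of_monotone (pullCount_mono I k)
    intro b
    obtain ⟨t, ht⟩ := pullCount_unbounded x I hU M hM k b
    exact ⟨t, ht.le⟩
  have hEmp : ∀ k : Fin K, Tendsto (fun t => empMean x I k t) atTop (nhds (μ k)) := by
    intro k
    have h := (havg k).comp (hT k)
    exact h.congr (fun t => (empMean_eq x I k t).symm)
  set Δ : ℝ := μ istar - μ i with hΔdef
  clear_value Δ
  have hΔpos : 0 < Δ := by rw [hΔdef]; linarith
  have e1 : ∀ᶠ t in atTop, empMean x I i t < μ i + Δ/4 :=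
    (hEmp i).eventually_lt_const (by linarith)
  have e2 : ∀ᶠ t in atTop, μ istar - Δ/4 < empMean x I istar t :=
    (hEmp istar).eventually_const_lt (by linarith)
  obtain ⟨t6', ht6'⟩ := Filter.eventually_atTop.mp (e1.and e2)
  set t6 := max t6' (max K 1) with ht6def
  have ht6K : K ≤ t6 := le_trans (le_max_left K 1) (le_max_right t6' _)
  have ht61 : 1 ≤ t6 := le_trans (le_max_right K 1) (le_max_right t6' _)
  have ht66 : t6' ≤ t6 := le_max_left _ _
  have key2 : ∀ t, t6 + 1 ≤ t → I t = i →
      (pullCount I i (t - 1) : ℝ) ≤ 8 * Real.log t / Δ^2 := by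
    intro t ht hIt
    have ht1 : 1 ≤ t := by omega
    have htK : K ≤ t - 1 := by omega
    have ht6'' : t6' ≤ t - 1 := by omega
    have hUt := hU t ht1
    have hne : ¬ ∃ k : Fin K, pullCount I k (t-1) = 0 := by
      rintro ⟨k, hk⟩; have := pullCount_pos x I hU htK k; omega
    rw [if_neg hne] at hUt
    have hkey := hUt istar
    rw [hIt] at hkey
    obtain ⟨hA, hB⟩ := ht6' (t-1) ht6''
    have hs0 : 0 ≤ Real.sqrt (2 * Real.log t / (pullCount I istar (t-1) : ℝ)) :=
      Real.sqrt_nonneg _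
    have hΔ2 : Δ/2 ≤ Real.sqrt (2 * Real.log t / (pullCount I i (t-1) : ℝ)) := by linarith
    have hTi1 : 1 ≤ pullCount I i (t-1) := pullCount_pos x I hU htK i
    have hTipos : (0:ℝ) < (pullCount I i (t-1) : ℝ) := by exact_mod_cast hTi1
    have hlog0 : 0 ≤ Real.log t := Real.log_nonneg (by exact_mod_cast ht1)
    have hsq := (Real.le_sqrt (by linarith) (div_nonneg (by linarith) hTipos.le)).mp hΔ2
    rw [le_div_iff₀ hTipos] at hsq
    rw [le_div_iff₀ (by positivity : (0:ℝ) < Δ^2)]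
    have hq : (Δ/2)^2 = Δ^2/4 := by ring
    rw [hq] at hsq
    nlinarith [hsq]
  set c0 : ℝ := (pullCount I i t6 : ℝ) with hc0
  have hc00 : 0 ≤ c0 := Nat.cast_nonneg _
  have hbound : ∀ n, t6 ≤ n → (pullCount I i n : ℝ) ≤ c0 + 8 * Real.log n / Δ^2 + 1 := by
    intro n hn
    induction n, hn using Nat.le_induction with
    | base =>
      have hl : 0 ≤ 8 * Real.log t6 / Δ^2 := by
        have h1 : (1:ℝ) ≤ (t6:ℝ) := by exact_mod_cast ht61
        have := Real.log_nonneg h1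
        positivity
      simp only [hc0]
      linarith
    | succ n hn ih =>
      have h1n : (1:ℕ) ≤ n := le_trans ht61 hn
      have hlogmono : Real.log n ≤ Real.log (n+1) := by
        apply Real.log_le_log (by exact_mod_cast h1n)
        exact_mod_cast Nat.le_succ n
      rw [pullCount_succ]
      split
      · next h =>
        have hk := key2 (n+1) (by omega) h
        rw [show n+1-1 = n from rfl] at hk
        push_cast at hk ⊢
        linarith
      · next h =>
        have hmono : 8 * Real.log n / Δ^2 ≤ 8 * Real.log (↑n+1) / Δ^2 := by gcongr
        push_cast
        push_cast at ih
        linarith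
  have h2 : Tendsto (fun n : ℕ => Real.log n / n) atTop (nhds 0) :=
    (Real.isLittleO_log_id_atTop.tendsto_div_nhds_zero).comp tendsto_natCast_atTop_atTop
  have hgtend : Tendsto (fun n : ℕ => (c0 + 1) / n + (8/Δ^2) * (Real.log n / n))
      atTop (nhds 0) := by
    have h1 := tendsto_const_div_atTop_nhds_zero_nat (c0 + 1)
    have h3 := h2.const_mul (8/Δ^2)
    have h4 := h1.add h3
    simpa using h4
  apply squeeze_zero' (g := fun n : ℕ => (c0 + 1) / n + (8/Δ^2) * (Real.log n / n))
    ?_ ?_ hgtend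
  · exact Filter.Eventually.of_forall (fun n => by positivity)
  · rw [Filter.eventually_atTop]
    refine ⟨max t6 1, fun n hn => ?_⟩
    have h1 : (1:ℕ) ≤ n := le_trans (le_max_right t6 1) hn
    have hb := hbound n (le_trans (le_max_left t6 1) hn)
    have hnpos : (0:ℝ) < (n:ℝ) := by exact_mod_cast h1
    calc (pullCount I i n : ℝ) / n ≤ (c0 + 8 * Real.log n / Δ^2 + 1) / n := by
          exact div_le_div_of_nonneg_right hb hnpos.le |>.trans_eq rfl
      _ = (c0 + 1) / n + (8/Δ^2) * (Real.log n / n) := by ring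

lemma slln {Ω : Type*} [MeasurableSpace Ω] (P : Measure Ω) [IsProbabilityMeasure P]
    {K : ℕ} (X : Fin K → ℕ → Ω → ℝ)
    (hindep : iIndepFun
      (fun p : Fin K × ℕ => X p.1 p.2) P)
    (hident : ∀ (i : Fin K) (u : ℕ), IdentDistrib (X i u) (X i 1) P P)
    (hint : ∀ i : Fin K, Integrable (X i 1) P)
    (μ : Fin K → ℝ) (hmean : ∀ i : Fin K, P[X i 1] = μ i) (k : Fin K) :
    ∀ᵐ ω ∂P, Tendsto (fun m : ℕ => (1 / (m:ℝ)) * ∑ u ∈ Finset.Icc 1 m, X k u ω)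
      atTop (nhds (μ k)) := by
  have hslln := strong_law_ae_real (fun u => X k (u+1))
    (by simpa using hint k)
    (by
      intro u v huv
      exact hindep.indepFun (by simp [Prod.ext_iff, huv] : ((k, u+1) : Fin K × ℕ) ≠ (k, v+1)))
    (fun u => (hident k (u+1)).trans (hident k 1).symm)
  have hmean' : P[fun ω => X k (0+1) ω] = μ k := by simpa using hmean k
  rw [hmean'] at hslln
  filter_upwards [hslln] with ω hω
  have : (fun m : ℕ => (1 / (m:ℝ)) * ∑ u ∈ Finset.Icc 1 m, X k u ω)
      = fun m : ℕ => (∑ u ∈ Finset.range m, X k (u+1) ω) / m := by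
    funext m
    rw [show Finset.Icc 1 m = Finset.Ico 1 (m+1) by rw [Finset.Ico_add_one_right_eq_Icc],
      Finset.sum_Ico_eq_sum_range]
    simp only [Nat.add_sub_cancel]
    rw [one_div_mul_eq_div]
    congr 1
    exact Finset.sum_congr rfl (fun u _ => by rw [add_comm])
  rw [this]
  exact hω

end UCBAux

theorem ucb1_bandit_suboptimal_pull_fraction_tendsto_zero_ae
    {Ω : Type*} [MeasurableSpace Ω] (P : Measure Ω) [IsProbabilityMeasure P]
    {K : ℕ} (hK : 2 ≤ K)
    (X : Fin K → ℕ → Ω → ℝ)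
    (hmeas : ∀ (i : Fin K) (u : ℕ), Measurable (X i u))
    (hindep : iIndepFun
      (fun p : Fin K × ℕ => X p.1 p.2) P)
    (hident : ∀ (i : Fin K) (u : ℕ), IdentDistrib (X i u) (X i 1) P P)
    (hint : ∀ i : Fin K, Integrable (X i 1) P)
    (μ : Fin K → ℝ) (hmean : ∀ i : Fin K, P[X i 1] = μ i)
    (istar : Fin K) (huniq : ∀ i : Fin K, i ≠ istar → μ i < μ istar)
    (I : ℕ → Ω → Fin K) (hImeas : ∀ t : ℕ, Measurable (I t))
    (hUCB : ∀ᵐ ω ∂P, UCB1Rule (fun i u => X i u ω) (fun t => I t ω) 2) :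
    ∀ i : Fin K, i ≠ istar →
      ∀ᵐ ω ∂P, Tendsto
        (fun n : ℕ => (pullCount (fun t => I t ω) i n : ℝ) / (n : ℝ)) atTop (nhds 0) := by
  intro i hi
  have hslln : ∀ᵐ ω ∂P, ∀ k : Fin K,
      Tendsto (fun m : ℕ => (1 / (m:ℝ)) * ∑ u ∈ Finset.Icc 1 m, X k u ω)
        atTop (nhds (μ k)) := by
    rw [ae_all_iff]
    intro k
    exact UCBAux.slln P X hindep hident hint μ hmean k
  filter_upwards [hslln, hUCB] with ω h1 h2
  exact UCBAux.det_main (fun k u => X k u ω) (fun t => I t ω) h2 μ h1 istar i (huniq i hi)
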